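/- If m is an odd positive integer all of whose prime factors exceed 2x (x ≥ 2), and for each j ≥ 1 the number of distinct prime factors of m in the interval (4^{j−1}·2x, 4^j·2x] is at most j, then φ(m)/m > 1 − 8/(9x). -/

import Mathlib

open Finset

private lemma weier (s : Finset ℕ) (f : ℕ → ℝ) (h0 : ∀ i ∈ s, 0 ≤ f i)
    (h1 : ∀ i ∈ s, f i ≤ 1) : 1 - ∑ i ∈ s, f i ≤ ∏ i ∈ s, (1 - f i) := by
  classical
  induction s using Finset.cons_induction with
  | empty => simp
  | cons a s ha ih =>
    rw [Finset.sum_cons, Finset.prod_cons]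
    have h0a := h0 a (Finset.mem_cons_self a s)
    have h1a := h1 a (Finset.mem_cons_self a s)
    have ih' := ih (fun i hi => h0 i (Finset.mem_cons_of_mem hi))
      (fun i hi => h1 i (Finset.mem_cons_of_mem hi))
    have hsum : 0 ≤ ∑ i ∈ s, f i :=
      Finset.sum_nonneg (fun i hi => h0 i (Finset.mem_cons_of_mem hi))
    nlinarith [mul_le_mul_of_nonneg_left ih' (sub_nonneg.2 h1a)]

private lemma geom_partial (N : ℕ) :
    ∑ k ∈ Finset.range N, ((k : ℝ) + 1) * (1/4) ^ k
      = 16/9 - ((4*N)/3 + 16/9) / 4 ^ N := by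
  induction N with
  | zero => norm_num
  | succ n ih =>
    rw [Finset.sum_range_succ, ih]
    have h4 : (4:ℝ) ^ n ≠ 0 := by positivity
    push_cast
    rw [one_div, inv_pow]
    field_simp
    ring

theorem stmt_13 (m : ℕ) (hm : 0 < m) (hmo : Odd m) (x : ℝ) (hx : 2 ≤ x)
    (hbig : ∀ p : ℕ, p.Prime → p ∣ m → 2 * x < p)
    (hfew : ∀ j : ℕ, 1 ≤ j →
      ((m.primeFactors.filter
          (fun p : ℕ => 4 ^ (j - 1) * (2 * x) < (p : ℝ) ∧ (p : ℝ) ≤ 4 ^ j * (2 * x))).card) ≤ j) :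
    1 - 8 / (9 * x) < (Nat.totient m : ℝ) / m := by
  classical
  have hx0 : (0:ℝ) < x := lt_of_lt_of_le two_pos hx
  have h2x : (4:ℝ) ≤ 2 * x := by linarith
  have h2x0 : (0:ℝ) < 2 * x := by linarith
  set S := m.primeFactors with hS
  -- totient formula over ℝ
  have htotQ := Nat.totient_eq_mul_prod_factors m
  have htot : (Nat.totient m : ℝ) = m * ∏ p ∈ S, (1 - (p : ℝ)⁻¹) := by
    have := congrArg (fun q : ℚ => (q : ℝ)) htotQ
    push_cast at this
    simpa using this
  have hm0 : (0:ℝ) < m := by exact_mod_cast hm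
  have hdiv : (Nat.totient m : ℝ) / m = ∏ p ∈ S, (1 - (p : ℝ)⁻¹) := by
    rw [htot]; field_simp
  -- Weierstrass lower bound
  have hfacts : ∀ p ∈ S, (0:ℝ) ≤ (p : ℝ)⁻¹ ∧ (p : ℝ)⁻¹ ≤ 1 := by
    intro p hp
    have hp1 : 1 ≤ p := (Nat.prime_of_mem_primeFactors hp).one_lt.le
    have hp1' : (1:ℝ) ≤ p := by exact_mod_cast hp1
    constructor
    · positivity
    · rw [inv_le_one_iff₀]; right; exact hp1'
  have hW : 1 - ∑ p ∈ S, (p : ℝ)⁻¹ ≤ ∏ p ∈ S, (1 - (p : ℝ)⁻¹) :=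
    weier S _ (fun i hi => (hfacts i hi).1) (fun i hi => (hfacts i hi).2)
  -- the partition
  set T : ℕ → Finset ℕ := fun j => S.filter
      (fun p : ℕ => 4 ^ (j - 1) * (2 * x) < (p : ℝ) ∧ (p : ℝ) ≤ 4 ^ j * (2 * x)) with hT
  have hcover : S = (Finset.Icc 1 m).biUnion T := by
    apply Finset.ext
    intro p
    constructor
    · intro hp
      have hpp := Nat.prime_of_mem_primeFactors hp
      have hpd := Nat.dvd_of_mem_primeFactors hp
      have hplt : 2 * x < p := hbig p hpp hpd
      have hpm : p ≤ m := Nat.le_of_dvd hm hpd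
      have hpm' : (p : ℝ) ≤ m := by exact_mod_cast hpm
      have hmlt : (m : ℝ) < 4 ^ m := by
        exact_mod_cast Nat.lt_pow_self (n := m) (a := 4) (by norm_num)
      have hex : ∃ j : ℕ, (p : ℝ) ≤ 4 ^ j * (2 * x) := by
        refine ⟨m, ?_⟩
        have : (4:ℝ) ^ m ≤ 4 ^ m * (2 * x) := by
          nlinarith [pow_pos (by norm_num : (0:ℝ) < 4) m]
        linarith
      set j := Nat.find hex with hj
      have hjle : (p : ℝ) ≤ 4 ^ j * (2 * x) := Nat.find_spec hex
      have hj1 : 1 ≤ j := by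
        rcases Nat.eq_zero_or_pos j with h0 | h1
        · exfalso
          rw [h0] at hjle
          simp at hjle
          linarith
        · exact h1
      have hjm : j ≤ m := Nat.find_min' hex (by
        have : (4:ℝ) ^ m ≤ 4 ^ m * (2 * x) := by
          nlinarith [pow_pos (by norm_num : (0:ℝ) < 4) m]
        linarith)
      have hjlt : 4 ^ (j - 1) * (2 * x) < (p : ℝ) := by
        have := Nat.find_min hex (m := j - 1) (by omega)
        push_neg at this
        exact this
      refine Finset.mem_biUnion.2 ⟨j, Finset.mem_Icc.2 ⟨hj1, hjm⟩, ?_⟩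
      exact Finset.mem_filter.2 ⟨hp, hjlt, hjle⟩
    · intro hp
      rcases Finset.mem_biUnion.1 hp with ⟨j, _, hj⟩
      exact (Finset.mem_filter.1 hj).1
  have hdisj : ∀ j ∈ Finset.Icc 1 m, ∀ j' ∈ Finset.Icc 1 m, j ≠ j' →
      Disjoint (T j) (T j') := by
    have key : ∀ j j' : ℕ, j < j' → Disjoint (T j) (T j') := by
      intro j j' hlt
      rw [Finset.disjoint_left]
      intro p hpj hpj'
      obtain ⟨-, -, h2⟩ := Finset.mem_filter.1 hpj
      obtain ⟨-, h3, -⟩ := Finset.mem_filter.1 hpj'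
      have hpow : (4:ℝ) ^ j ≤ 4 ^ (j' - 1) := by
        apply pow_le_pow_right₀ (by norm_num)
        omega
      have : (4:ℝ) ^ j * (2 * x) ≤ 4 ^ (j' - 1) * (2 * x) := by
        nlinarith
      linarith
    intro j _ j' _ hne
    rcases lt_or_gt_of_ne hne with h | h
    · exact key j j' h
    · exact (key j' j h).symm
  -- bound the sum
  have hsum_eq : ∑ p ∈ S, (p : ℝ)⁻¹ = ∑ j ∈ Finset.Icc 1 m, ∑ p ∈ T j, (p : ℝ)⁻¹ := by
    rw [hcover]
    exact Finset.sum_biUnion hdisj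
  have hinner : ∀ j ∈ Finset.Icc 1 m,
      ∑ p ∈ T j, (p : ℝ)⁻¹ ≤ (j : ℝ) * ((1/4) ^ (j - 1) * (2 * x)⁻¹) := by
    intro j hjmem
    obtain ⟨hj1, -⟩ := Finset.mem_Icc.1 hjmem
    have hpow0 : (0:ℝ) < 4 ^ (j - 1) := by positivity
    have hb0 : (0:ℝ) < 4 ^ (j - 1) * (2 * x) := by positivity
    have step1 : ∑ p ∈ T j, (p : ℝ)⁻¹ ≤ (T j).card • (4 ^ (j - 1) * (2 * x))⁻¹ := by
      apply Finset.sum_le_card_nsmul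
      intro p hp
      obtain ⟨-, h2, -⟩ := Finset.mem_filter.1 hp
      have hp0 : (0:ℝ) < p := lt_trans hb0 h2
      exact le_of_lt (inv_strictAnti₀ hb0 h2)
    have hcard : ((T j).card : ℝ) ≤ j := Nat.cast_le.mpr (hfew j hj1)
    have hinv0 : (0:ℝ) ≤ (4 ^ (j - 1) * (2 * x))⁻¹ := by positivity
    calc ∑ p ∈ T j, (p : ℝ)⁻¹ ≤ (T j).card • (4 ^ (j - 1) * (2 * x))⁻¹ := step1
      _ = ((T j).card : ℝ) * (4 ^ (j - 1) * (2 * x))⁻¹ := by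
          rw [nsmul_eq_mul]
      _ ≤ (j : ℝ) * (4 ^ (j - 1) * (2 * x))⁻¹ := by
          apply mul_le_mul_of_nonneg_right hcard hinv0
      _ = (j : ℝ) * ((1/4) ^ (j - 1) * (2 * x)⁻¹) := by
          rw [mul_inv, div_pow, one_pow, one_div]
  have hgeom : ∑ j ∈ Finset.Icc 1 m, (j : ℝ) * (1/4) ^ (j - 1) < 16/9 := by
    have hre : ∑ j ∈ Finset.Icc 1 m, (j : ℝ) * (1/4) ^ (j - 1)
        = ∑ k ∈ Finset.range m, ((k : ℝ) + 1) * (1/4) ^ k := by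
      rw [← Finset.Ico_add_one_right_eq_Icc, Finset.sum_Ico_eq_sum_range]
      apply Finset.sum_congr (by norm_num)
      intro k _
      have hk : 1 + k - 1 = k := by omega
      rw [hk]
      push_cast
      ring
    rw [hre, geom_partial]
    have h1 : (0:ℝ) < (4*m)/3 + 16/9 := by positivity
    have h2 : (0:ℝ) < 4 ^ m := by positivity
    have : (0:ℝ) < ((4*m)/3 + 16/9) / 4 ^ m := by positivity
    linarith
  have hsum_lt : ∑ p ∈ S, (p : ℝ)⁻¹ < 8 / (9 * x) := by
    rw [hsum_eq]
    calc ∑ j ∈ Finset.Icc 1 m, ∑ p ∈ T j, (p : ℝ)⁻¹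
        ≤ ∑ j ∈ Finset.Icc 1 m, (j : ℝ) * ((1/4) ^ (j - 1) * (2 * x)⁻¹) :=
          Finset.sum_le_sum hinner
      _ = (∑ j ∈ Finset.Icc 1 m, (j : ℝ) * (1/4) ^ (j - 1)) * (2 * x)⁻¹ := by
          rw [Finset.sum_mul]
          apply Finset.sum_congr rfl
          intro j _
          ring
      _ < (16/9) * (2 * x)⁻¹ := by
          apply mul_lt_mul_of_pos_right hgeom
          positivity
      _ = 8 / (9 * x) := by
          field_simp
          ring
  rw [hdiv]
  calc 1 - 8 / (9 * x) < 1 - ∑ p ∈ S, (p : ℝ)⁻¹ := by linarith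
    _ ≤ ∏ p ∈ S, (1 - (p : ℝ)⁻¹) := hW
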